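/- (Proposition 3.1) Let α, β, ξ be positive reals and let χ ∈ ℝ², γ ∈ ℝ^{2×2} satisfy 0 < Q(χ, γ) < 1. Then the Hessian of the strain-energy density W at (χ, γ) is positive semi-definite: W is twice Fréchet differentiable at (χ, γ) and D²W(χ, γ)[(a, b), (a, b)] ≥ 0 for all a ∈ ℝ² and b ∈ ℝ^{2×2}. -/

import Mathlib

noncomputable section

/-- The quadratic form `Q(χ, γ)` on strains. -/
def Qform (α β ξ : ℝ) (χ : Fin 2 → ℝ) (γ : Fin 2 → Fin 2 → ℝ) : ℝ :=
  β ^ 2 * (α ^ 2 * ((χ 0) ^ 2 + (χ 1) ^ 2) +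
    ξ ^ 2 * ((γ 0 0) ^ 2 + (γ 0 1) ^ 2 + (γ 1 0) ^ 2 + (γ 1 1) ^ 2))

/-- The quadratic form `Q*(m, τ)` on stresses. -/
def Qstar (α β ξ : ℝ) (m : Fin 2 → ℝ) (τ : Fin 2 → Fin 2 → ℝ) : ℝ :=
  β ^ 2 * (((m 0) ^ 2 + (m 1) ^ 2) / α ^ 2 +
    ((τ 0 0) ^ 2 + (τ 0 1) ^ 2 + (τ 1 0) ^ 2 + (τ 1 1) ^ 2) / ξ ^ 2)

/-- The strain-limiting constitutive map `S` sending stresses to strains. -/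
def Smap (α β ξ : ℝ) (m : Fin 2 → ℝ) (τ : Fin 2 → Fin 2 → ℝ) :
    (Fin 2 → ℝ) × (Fin 2 → Fin 2 → ℝ) :=
  (fun i => m i / (α ^ 2 * (1 + Real.sqrt (Qstar α β ξ m τ))),
   fun i j => τ i j / (ξ ^ 2 * (1 + Real.sqrt (Qstar α β ξ m τ))))

/-- The inverse constitutive map `T` sending strains to stresses. -/
def Tmap (α β ξ : ℝ) (χ : Fin 2 → ℝ) (γ : Fin 2 → Fin 2 → ℝ) :
    (Fin 2 → ℝ) × (Fin 2 → Fin 2 → ℝ) :=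
  (fun i => α ^ 2 * χ i / (1 - Real.sqrt (Qform α β ξ χ γ)),
   fun i j => ξ ^ 2 * γ i j / (1 - Real.sqrt (Qform α β ξ χ γ)))

/-- The strain-energy density `W(χ, γ)`. -/
def Wdens (α β ξ : ℝ) (χ : Fin 2 → ℝ) (γ : Fin 2 → Fin 2 → ℝ) : ℝ :=
  -(1 / β ^ 2) * (Real.sqrt (Qform α β ξ χ γ) +
    Real.log (1 - Real.sqrt (Qform α β ξ χ γ)))

/-- The complementary strain-energy density `W*(m, τ)`. -/
def Wstar (α β ξ : ℝ) (m : Fin 2 → ℝ) (τ : Fin 2 → Fin 2 → ℝ) : ℝ :=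
  (1 / β ^ 2) * (Real.sqrt (Qstar α β ξ m τ) -
    Real.log (1 + Real.sqrt (Qstar α β ξ m τ)))

set_option synthInstance.maxHeartbeats 1000000
set_option maxHeartbeats 1000000

namespace HessAux

abbrev E2 : Type := (Fin 2 → ℝ) × (Fin 2 → Fin 2 → ℝ)

def cχ (i : Fin 2) : E2 →L[ℝ] ℝ :=
  (ContinuousLinearMap.proj i : (Fin 2 → ℝ) →L[ℝ] ℝ).comp
    (ContinuousLinearMap.fst ℝ (Fin 2 → ℝ) (Fin 2 → Fin 2 → ℝ))

def cγ (i j : Fin 2) : E2 →L[ℝ] ℝ :=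
  ((ContinuousLinearMap.proj j : (Fin 2 → ℝ) →L[ℝ] ℝ).comp
    (ContinuousLinearMap.proj i : (Fin 2 → Fin 2 → ℝ) →L[ℝ] (Fin 2 → ℝ))).comp
    (ContinuousLinearMap.snd ℝ (Fin 2 → ℝ) (Fin 2 → Fin 2 → ℝ))

/-- The symmetric continuous bilinear form associated to `Qform`. -/
def Bc (α β ξ : ℝ) : E2 →L[ℝ] E2 →L[ℝ] ℝ :=
  (β ^ 2 * α ^ 2) • ((cχ 0).smulRight (cχ 0) + (cχ 1).smulRight (cχ 1)) +
  (β ^ 2 * ξ ^ 2) • ((cγ 0 0).smulRight (cγ 0 0) + (cγ 0 1).smulRight (cγ 0 1) +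
    (cγ 1 0).smulRight (cγ 1 0) + (cγ 1 1).smulRight (cγ 1 1))

lemma Bc_apply (α β ξ : ℝ) (h k : E2) :
    Bc α β ξ h k = β ^ 2 * (α ^ 2 * (h.1 0 * k.1 0 + h.1 1 * k.1 1) +
      ξ ^ 2 * (h.2 0 0 * k.2 0 0 + h.2 0 1 * k.2 0 1 +
        h.2 1 0 * k.2 1 0 + h.2 1 1 * k.2 1 1)) := by
  simp [Bc, cχ, cγ, ContinuousLinearMap.smulRight_apply]
  ring

lemma Bc_symm (α β ξ : ℝ) (h k : E2) : Bc α β ξ h k = Bc α β ξ k h := by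
  simp only [Bc_apply]; ring

lemma Bc_self_nonneg (α β ξ : ℝ) (h : E2) : 0 ≤ Bc α β ξ h h := by
  rw [Bc_apply]
  nlinarith [mul_self_nonneg (h.1 0), mul_self_nonneg (h.1 1), mul_self_nonneg (h.2 0 0),
    mul_self_nonneg (h.2 0 1), mul_self_nonneg (h.2 1 0), mul_self_nonneg (h.2 1 1),
    sq_nonneg α, sq_nonneg β, sq_nonneg ξ,
    mul_nonneg (sq_nonneg α) (add_nonneg (mul_self_nonneg (h.1 0)) (mul_self_nonneg (h.1 1))),
    mul_nonneg (sq_nonneg ξ) (add_nonneg (add_nonneg (add_nonneg (mul_self_nonneg (h.2 0 0))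
      (mul_self_nonneg (h.2 0 1))) (mul_self_nonneg (h.2 1 0))) (mul_self_nonneg (h.2 1 1)))]

lemma Qform_eq_Bc (α β ξ : ℝ) (p : E2) : Qform α β ξ p.1 p.2 = Bc α β ξ p p := by
  rw [Bc_apply, Qform]; ring

lemma hasFDerivAt_Q (α β ξ : ℝ) (p : E2) :
    HasFDerivAt (fun p : E2 => Qform α β ξ p.1 p.2) ((2 : ℝ) • Bc α β ξ p) p := by
  have h := (Bc α β ξ).hasFDerivAt_of_bilinear (hasFDerivAt_id p) (hasFDerivAt_id p)
  have hfun : (fun p : E2 => Qform α β ξ p.1 p.2) = fun y : E2 => Bc α β ξ y y := by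
    funext y; exact Qform_eq_Bc α β ξ y
  rw [hfun]
  refine h.congr_fderiv ?_
  refine ContinuousLinearMap.ext fun k => ?_
  simp [ContinuousLinearMap.precompR, ContinuousLinearMap.precompL, two_smul]
  rw [Bc_symm α β ξ k p]

lemma sqrt_lt_one' {t : ℝ} (ht0 : 0 < t) (ht1 : t < 1) : Real.sqrt t < 1 := by
  have := Real.sqrt_lt_sqrt ht0.le ht1
  simpa using this

lemma hasDerivAt_phi (β : ℝ) (hβ : 0 < β) {t : ℝ} (ht0 : 0 < t) (ht1 : t < 1) :
    HasDerivAt (fun t => -(1 / β ^ 2) * (Real.sqrt t + Real.log (1 - Real.sqrt t)))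
      (1 / (2 * β ^ 2 * (1 - Real.sqrt t))) t := by
  have hs0 : 0 < Real.sqrt t := Real.sqrt_pos.2 ht0
  have hs1 : Real.sqrt t < 1 := sqrt_lt_one' ht0 ht1
  have hne : 1 - Real.sqrt t ≠ 0 := by linarith
  have hsq := Real.hasDerivAt_sqrt (ne_of_gt ht0)
  have hlog := (((hasDerivAt_const t (1 : ℝ)).sub hsq).log hne)
  have h := ((hsq.add hlog).const_mul (-(1 / β ^ 2)))
  refine h.congr_deriv ?_
  simp only [Pi.sub_apply]
  have hβ' : (β : ℝ) ≠ 0 := ne_of_gt hβ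
  have hs0' : Real.sqrt t ≠ 0 := ne_of_gt hs0
  field_simp
  ring

lemma hasDerivAt_g (β : ℝ) (hβ : 0 < β) {t : ℝ} (ht0 : 0 < t) (ht1 : t < 1) :
    HasDerivAt (fun t => 1 / (2 * β ^ 2 * (1 - Real.sqrt t)))
      ((β ^ 2 / Real.sqrt t) / (2 * β ^ 2 * (1 - Real.sqrt t)) ^ 2) t := by
  have hs0 : 0 < Real.sqrt t := Real.sqrt_pos.2 ht0
  have hs1 : Real.sqrt t < 1 := sqrt_lt_one' ht0 ht1
  have hβ' : (β : ℝ) ≠ 0 := ne_of_gt hβ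
  have hne : (2 * β ^ 2 * (1 - Real.sqrt t)) ≠ 0 := by
    apply mul_ne_zero (by positivity) (by intro h; nlinarith)
  have hsq := Real.hasDerivAt_sqrt (ne_of_gt ht0)
  have hf : HasDerivAt (fun t => 2 * β ^ 2 * (1 - Real.sqrt t))
      (2 * β ^ 2 * (0 - 1 / (2 * Real.sqrt t))) t :=
    ((hasDerivAt_const t (1 : ℝ)).sub hsq).const_mul _
  have h := hf.inv hne
  simp only [one_div]
  refine h.congr_deriv ?_
  have hs0' : Real.sqrt t ≠ 0 := ne_of_gt hs0
  field_simp
  ring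

/-- First derivative of `W` at any point with `0 < Q < 1`. -/
lemma hasFDerivAt_W (α β ξ : ℝ) (hβ : 0 < β) (p : E2)
    (hp0 : 0 < Qform α β ξ p.1 p.2) (hp1 : Qform α β ξ p.1 p.2 < 1) :
    HasFDerivAt (fun p : E2 => Wdens α β ξ p.1 p.2)
      ((2 * (1 / (2 * β ^ 2 * (1 - Real.sqrt (Qform α β ξ p.1 p.2))))) • Bc α β ξ p) p := by
  have hq := hasFDerivAt_Q α β ξ p
  have hφ := hasDerivAt_phi β hβ hp0 hp1
  have h := hφ.comp_hasFDerivAt p hq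
  have hEq : (2 * (1 / (2 * β ^ 2 * (1 - Real.sqrt (Qform α β ξ p.1 p.2))))) • Bc α β ξ p
      = (1 / (2 * β ^ 2 * (1 - Real.sqrt (Qform α β ξ p.1 p.2)))) • ((2 : ℝ) • Bc α β ξ p) := by
    rw [smul_smul]; ring_nf
  rw [hEq]
  exact h

end HessAux

open HessAux in
/-- Proposition 3.1: the Hessian of the strain-energy density
`W` at a strain `(χ, γ)` with `0 < Q(χ, γ) < 1` is positive semi-definite. -/
theorem hessian_Wdens_posSemidef (α β ξ : ℝ) (hα : 0 < α) (hβ : 0 < β) (hξ : 0 < ξ)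
    (χ : Fin 2 → ℝ) (γ : Fin 2 → Fin 2 → ℝ)
    (h0 : 0 < Qform α β ξ χ γ) (h1 : Qform α β ξ χ γ < 1) :
    ∃ D : ((Fin 2 → ℝ) × (Fin 2 → Fin 2 → ℝ)) →L[ℝ]
        ((Fin 2 → ℝ) × (Fin 2 → Fin 2 → ℝ)) →L[ℝ] ℝ,
      HasFDerivAt
        (fderiv ℝ (fun p : (Fin 2 → ℝ) × (Fin 2 → Fin 2 → ℝ) => Wdens α β ξ p.1 p.2))
        D (χ, γ) ∧
      ∀ (a : Fin 2 → ℝ) (b : Fin 2 → Fin 2 → ℝ), 0 ≤ D (a, b) (a, b) := by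
  classical
  set p₀ : E2 := (χ, γ) with hp₀
  have hQ0 : 0 < Qform α β ξ p₀.1 p₀.2 := h0
  have hQ1 : Qform α β ξ p₀.1 p₀.2 < 1 := h1
  -- eventual membership in (0,1)
  have hcont : ContinuousAt (fun p : E2 => Qform α β ξ p.1 p.2) p₀ :=
    (hasFDerivAt_Q α β ξ p₀).continuousAt
  have hev : ∀ᶠ p : E2 in nhds p₀,
      Qform α β ξ p.1 p.2 ∈ Set.Ioo (0 : ℝ) 1 :=
    hcont (isOpen_Ioo.mem_nhds ⟨hQ0, hQ1⟩)
  -- the gradient field G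
  have hfd : fderiv ℝ (fun p : E2 => Wdens α β ξ p.1 p.2) =ᶠ[nhds p₀]
      fun p : E2 => (2 * (1 / (2 * β ^ 2 * (1 - Real.sqrt (Qform α β ξ p.1 p.2))))) • Bc α β ξ p := by
    filter_upwards [hev] with p hp
    exact (hasFDerivAt_W α β ξ hβ p hp.1 hp.2).fderiv
  -- derivative of the scalar factor
  have hc : HasFDerivAt
      (fun p : E2 => 2 * (1 / (2 * β ^ 2 * (1 - Real.sqrt (Qform α β ξ p.1 p.2)))))
      ((2 * ((β ^ 2 / Real.sqrt (Qform α β ξ p₀.1 p₀.2)) /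
        (2 * β ^ 2 * (1 - Real.sqrt (Qform α β ξ p₀.1 p₀.2))) ^ 2)) •
        ((2 : ℝ) • Bc α β ξ p₀)) p₀ :=
    HasDerivAt.comp_hasFDerivAt (h₂ := fun t => 2 * (1 / (2 * β ^ 2 * (1 - Real.sqrt t)))) p₀
      ((hasDerivAt_g β hβ hQ0 hQ1).const_mul (2 : ℝ)) (hasFDerivAt_Q α β ξ p₀)
  have hBd : HasFDerivAt (fun p : E2 => Bc α β ξ p) (Bc α β ξ) p₀ := (Bc α β ξ).hasFDerivAt
  have hG := hc.smul hBd
  refine ⟨_, hG.congr_of_eventuallyEq hfd, ?_⟩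
  intro a b
  set h : E2 := (a, b) with hh
  have hs0 : 0 < Real.sqrt (Qform α β ξ p₀.1 p₀.2) := Real.sqrt_pos.2 hQ0
  have hs1 : Real.sqrt (Qform α β ξ p₀.1 p₀.2) < 1 := sqrt_lt_one' hQ0 hQ1
  have hBhh : 0 ≤ Bc α β ξ h h := Bc_self_nonneg α β ξ h
  have hg0 : 0 ≤ 2 * (1 / (2 * β ^ 2 * (1 - Real.sqrt (Qform α β ξ p₀.1 p₀.2)))) := by
    have hx : 0 < 2 * β ^ 2 * (1 - Real.sqrt (Qform α β ξ p₀.1 p₀.2)) :=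
      mul_pos (by positivity) (by linarith)
    have := one_div_pos.mpr hx
    linarith
  have hg2 : 0 ≤ (β ^ 2 / Real.sqrt (Qform α β ξ p₀.1 p₀.2)) /
      (2 * β ^ 2 * (1 - Real.sqrt (Qform α β ξ p₀.1 p₀.2))) ^ 2 :=
    div_nonneg (div_nonneg (sq_nonneg β) (Real.sqrt_nonneg _)) (sq_nonneg _)
  simp only [ContinuousLinearMap.add_apply, ContinuousLinearMap.coe_smul',
    Pi.smul_apply, ContinuousLinearMap.smulRight_apply, ContinuousLinearMap.smul_apply,
    smul_eq_mul]
  have key1 : 0 ≤ 2 * (1 / (2 * β ^ 2 * (1 - Real.sqrt (Qform α β ξ p₀.1 p₀.2)))) *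
      Bc α β ξ h h := mul_nonneg hg0 hBhh
  have key2 : 0 ≤ (2 * ((β ^ 2 / Real.sqrt (Qform α β ξ p₀.1 p₀.2)) /
        (2 * β ^ 2 * (1 - Real.sqrt (Qform α β ξ p₀.1 p₀.2))) ^ 2)) *
      (2 * Bc α β ξ p₀ h) * Bc α β ξ p₀ h := by
    nlinarith [mul_self_nonneg (Bc α β ξ p₀ h)]
  nlinarith [key1, key2]
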